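/- Let μ = (μ₁,…,μ_m) and λ = (λ₁,…,λ_n) be probability vectors, ω₁ and ω₂ two weight functions with respect to μ and λ, and x₁,…,xₙ ∈ (0,1/2]. Let Aₙ = ∑_{j=1}^n λⱼxⱼ, Gₙ = ∏_{j=1}^n xⱼ^{λⱼ}, Aₙ' = ∑_{j=1}^n λⱼ(1−xⱼ), Gₙ' = ∏_{j=1}^n (1−xⱼ)^{λⱼ}. Then Aₙ'/Aₙ ≤ ∏_{i=1}^m ( I(∑_{j=1}^n ω₁(i,j)λⱼ(1−xⱼ), ∑_{j=1}^n ω₂(i,j)λⱼ(1−xⱼ)) / I(∑_{j=1}^n ω₁(i,j)λⱼxⱼ, ∑_{j=1}^n ω₂(i,j)λⱼxⱼ) )^{μᵢ} ≤ Gₙ'/Gₙ. In particular this refines Ky Fan's inequality Aₙ'/Aₙ ≤ Gₙ'/Gₙ. -/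

import Mathlib

open Finset Set intervalIntegral

noncomputable def KFg (t : ℝ) : ℝ := Real.log (1 - t) - Real.log t

lemma KFg_contOn : ContinuousOn KFg (Set.Ioo (0:ℝ) 1) := by
  intro t ht
  have h1 : (1:ℝ) - t ≠ 0 := by cases ht with | intro h1 h2 => linarith
  have h2 : t ≠ 0 := ne_of_gt ht.1
  exact (((Real.continuousAt_log h1).comp (by fun_prop)).sub (Real.continuousAt_log h2)).continuousWithinAt

lemma KFg_convex : ConvexOn ℝ (Set.Ioc (0:ℝ) (1/2)) KFg := by
  have hint : interior (Set.Ioc (0:ℝ) (1/2)) = Set.Ioo (0:ℝ) (1/2) := interior_Ioc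
  apply convexOn_of_hasDerivWithinAt2_nonneg (f' := fun t => -(1-t)⁻¹ - t⁻¹)
      (f'' := fun t => -((1-t)^2)⁻¹ + (t^2)⁻¹) (convex_Ioc _ _)
  · exact KFg_contOn.mono (fun t ht => ⟨ht.1, lt_of_le_of_lt ht.2 (by norm_num)⟩)
  · intro t ht
    rw [hint] at ht
    have h1 : (1:ℝ) - t ≠ 0 := by cases ht with | intro h1 h2 => intro h; linarith
    have h2 : t ≠ 0 := ne_of_gt ht.1
    have d1 : HasDerivAt (fun u : ℝ => Real.log (1 - u)) (-(1-t)⁻¹) t := by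
      have := (Real.hasDerivAt_log h1).comp t ((hasDerivAt_id t).const_sub 1)
      exact this.congr_deriv (by simp)
    have d2 : HasDerivAt KFg (-(1-t)⁻¹ - t⁻¹) t := d1.sub (Real.hasDerivAt_log h2)
    exact d2.hasDerivWithinAt
  · intro t ht
    rw [hint] at ht
    have h1 : (1:ℝ) - t ≠ 0 := by cases ht with | intro h1 h2 => intro h; linarith
    have h2 : t ≠ 0 := ne_of_gt ht.1
    have d1 : HasDerivAt (fun u : ℝ => -(1-u)⁻¹) (-((1-t)^2)⁻¹) t := by
      have h := ((hasDerivAt_id t).const_sub 1).inv h1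
      have := h.neg
      exact this.congr_deriv (by simp only [id]; ring)
    have d2 : HasDerivAt (fun u : ℝ => u⁻¹) (-(t^2)⁻¹) t := by
      have := (hasDerivAt_id t).inv h2
      exact this.congr_deriv (by simp only [id]; ring)
    have := d1.sub d2
    simp only [sub_neg_eq_add] at this
    exact this.hasDerivWithinAt
  · intro t ht
    rw [hint] at ht
    have h1 : (0:ℝ) < 1 - t := by cases ht with | intro h1 h2 => linarith
    have : t^2 ≤ (1-t)^2 := by nlinarith [ht.1, ht.2]
    have := inv_anti₀ (pow_pos ht.1 2) this
    linarith

/-- The identric mean: `I(a,b) = a` if `a = b`, and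
`I(a,b) = (1/e)(b^b/a^a)^{1/(b-a)}` otherwise. -/
noncomputable def identric (a b : ℝ) : ℝ :=
  if a = b then a else (Real.exp 1)⁻¹ * (b ^ b / a ^ a) ^ (b - a)⁻¹

lemma identric_pos {a b : ℝ} (ha : 0 < a) (hb : 0 < b) : 0 < identric a b := by
  unfold identric
  split
  · exact ha
  · have h1 : (0:ℝ) < b ^ b / a ^ a := div_pos (Real.rpow_pos_of_pos hb b) (Real.rpow_pos_of_pos ha a)
    positivity

lemma log_identric {a b : ℝ} (ha : 0 < a) (hb : 0 < b) :
    Real.log (identric a b) = if a = b then Real.log a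
      else (∫ t in a..b, Real.log t) / (b - a) := by
  unfold identric
  split
  · rfl
  · rename_i hab
    have hba : b - a ≠ 0 := sub_ne_zero.mpr (Ne.symm hab)
    rw [integral_log]
    have h1 : (0:ℝ) < b ^ b / a ^ a := div_pos (Real.rpow_pos_of_pos hb b) (Real.rpow_pos_of_pos ha a)
    rw [Real.log_mul (by positivity) (ne_of_gt (Real.rpow_pos_of_pos h1 _)),
      Real.log_rpow h1, Real.log_inv, Real.log_exp,
      Real.log_div (ne_of_gt (Real.rpow_pos_of_pos hb b)) (ne_of_gt (Real.rpow_pos_of_pos ha a)),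
      Real.log_rpow hb, Real.log_rpow ha]
    field_simp
    ring

lemma identric_comm (a b : ℝ) (ha : 0 < a) (hb : 0 < b) : identric a b = identric b a := by
  rw [← Real.exp_log (identric_pos ha hb), ← Real.exp_log (identric_pos hb ha),
    log_identric ha hb, log_identric hb ha]
  rcases eq_or_ne a b with h | h
  · simp [h]
  · rw [if_neg h, if_neg h.symm, integral_symm]
    congr 1
    rw [div_eq_div_iff (sub_ne_zero.mpr h.symm) (sub_ne_zero.mpr h)]
    ring

lemma KFg_hh {a b : ℝ} (ha : a ∈ Set.Ioc (0:ℝ) (1/2)) (hb : b ∈ Set.Ioc (0:ℝ) (1/2))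
    (hab : a < b) :
    KFg ((a+b)/2) ≤ Real.log (identric (1-a) (1-b)) - Real.log (identric a b) ∧
    Real.log (identric (1-a) (1-b)) - Real.log (identric a b) ≤ (KFg a + KFg b)/2 := by
  obtain ⟨ha0, ha2⟩ := ha
  obtain ⟨hb0, hb2⟩ := hb
  have hba : (0:ℝ) < b - a := by linarith
  have hsub : Set.Icc a b ⊆ Set.Ioc (0:ℝ) (1/2) := fun t ht => ⟨lt_of_lt_of_le ha0 ht.1, le_trans ht.2 hb2⟩
  have hsub' : Set.Icc a b ⊆ Set.Ioo (0:ℝ) 1 := fun t ht =>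
    ⟨lt_of_lt_of_le ha0 ht.1, lt_of_le_of_lt (le_trans ht.2 hb2) (by norm_num)⟩
  have hui : Set.uIcc a b = Set.Icc a b := uIcc_of_le hab.le
  -- integrability
  have hcg : ContinuousOn KFg (Set.Icc a b) := KFg_contOn.mono hsub'
  have hig : IntervalIntegrable KFg MeasureTheory.volume a b := by
    apply ContinuousOn.intervalIntegrable
    rw [hui]; exact hcg
  have h1a : (0:ℝ) < 1 - a := by linarith
  have h1b : (0:ℝ) < 1 - b := by linarith
  -- integrability of the pieces
  have hil : IntervalIntegrable Real.log MeasureTheory.volume a b := by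
    apply ContinuousOn.intervalIntegrable
    rw [hui]
    exact fun t ht => (Real.continuousAt_log (ne_of_gt (lt_of_lt_of_le ha0 ht.1))).continuousWithinAt
  have hil1 : IntervalIntegrable (fun t => Real.log (1 - t)) MeasureTheory.volume a b := by
    apply ContinuousOn.intervalIntegrable
    rw [hui]
    intro t ht
    have h1t : (1:ℝ) - t ≠ 0 := by have := (hsub' ht).2; intro hh; linarith
    exact ((Real.continuousAt_log h1t).comp (by fun_prop)).continuousWithinAt
  -- representation of the log identric difference as an integral mean
  have hrepr : Real.log (identric (1-a) (1-b)) - Real.log (identric a b)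
      = (∫ t in a..b, KFg t) / (b - a) := by
    rw [log_identric h1a h1b, log_identric ha0 hb0,
      if_neg (show (1:ℝ)-a ≠ 1-b by intro h; apply absurd hab; simp; linarith),
      if_neg (ne_of_lt hab)]
    have hflip : (∫ t in (1-a)..(1-b), Real.log t) = -∫ t in a..b, Real.log (1 - t) := by
      rw [intervalIntegral.integral_comp_sub_left Real.log 1, integral_symm]
    rw [hflip]
    have : (∫ t in a..b, KFg t) = (∫ t in a..b, Real.log (1-t)) - ∫ t in a..b, Real.log t :=
      integral_sub hil1 hil
    rw [this]
    have h1 : (1:ℝ) - b - (1 - a) = -(b - a) := by ring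
    rw [h1, neg_div_neg_eq, ← sub_div]
  rw [hrepr]
  constructor
  · -- lower bound (Hermite–Hadamard, left)
    have hig2 : IntervalIntegrable (fun t => KFg (a+b-t)) MeasureTheory.volume a b := by
      apply ContinuousOn.intervalIntegrable
      rw [hui]
      exact hcg.comp ((continuous_const.sub continuous_id).continuousOn)
        (fun t ht => ⟨by linarith [ht.2], by linarith [ht.1]⟩)
    have hpt : ∀ t ∈ Set.Icc a b, (fun _ : ℝ => 2 * KFg ((a+b)/2)) t ≤ KFg t + KFg (a+b-t) := by
      intro t ht
      have hm1 : t ∈ Set.Ioc (0:ℝ) (1/2) := hsub ht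
      have hm2 : a+b-t ∈ Set.Ioc (0:ℝ) (1/2) := hsub ⟨by linarith [ht.2], by linarith [ht.1]⟩
      have hcv := KFg_convex.2 hm1 hm2 (by norm_num : (0:ℝ) ≤ 1/2)
        (by norm_num : (0:ℝ) ≤ 1/2) (by norm_num)
      simp only [smul_eq_mul] at hcv
      have he : (1/2:ℝ) * t + (1/2) * (a+b-t) = (a+b)/2 := by ring
      rw [he] at hcv
      show 2 * KFg ((a+b)/2) ≤ KFg t + KFg (a+b-t)
      linarith
    have := integral_mono_on hab.le intervalIntegrable_const (hig.add hig2) hpt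
    rw [integral_const, integral_add hig hig2] at this
    have hflip2 : (∫ t in a..b, KFg (a+b-t)) = ∫ t in a..b, KFg t := by
      rw [intervalIntegral.integral_comp_sub_left KFg (a+b),
        show a+b-b = a by ring, show a+b-a = b by ring]
    rw [hflip2, smul_eq_mul] at this
    rw [le_div_iff₀ hba]
    linarith
  · -- upper bound (Hermite–Hadamard, right)
    have hpt : ∀ t ∈ Set.Icc a b,
        KFg t ≤ (fun t => ((b*KFg a - a*KFg b) + (KFg b - KFg a)*t)/(b-a)) t := by
      intro t ht
      have hp : (0:ℝ) ≤ (b-t)/(b-a) := div_nonneg (by linarith [ht.2]) hba.le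
      have hq : (0:ℝ) ≤ (t-a)/(b-a) := div_nonneg (by linarith [ht.1]) hba.le
      have hs : (b-t)/(b-a) + (t-a)/(b-a) = 1 := by field_simp; ring
      have hcv := KFg_convex.2 ⟨ha0, ha2⟩ ⟨hb0, hb2⟩ hp hq hs
      simp only [smul_eq_mul] at hcv
      have he : (b-t)/(b-a) * a + (t-a)/(b-a) * b = t := by field_simp; ring
      rw [he] at hcv
      have he2 : (b-t)/(b-a) * KFg a + (t-a)/(b-a) * KFg b
          = ((b*KFg a - a*KFg b) + (KFg b - KFg a)*t)/(b-a) := by field_simp; ring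
      rw [he2] at hcv
      exact hcv
    have hcont2 : Continuous (fun t : ℝ => (KFg b - KFg a)*t) := by fun_prop
    have hcont : Continuous (fun t : ℝ => ((b*KFg a - a*KFg b) + (KFg b - KFg a)*t)/(b-a)) := by
      fun_prop
    have hichord : IntervalIntegrable (fun t : ℝ => ((b*KFg a - a*KFg b) + (KFg b - KFg a)*t)/(b-a))
        MeasureTheory.volume a b := hcont.intervalIntegrable a b
    have := integral_mono_on hab.le hig hichord hpt
    have hcval : (∫ t in a..b, ((b*KFg a - a*KFg b) + (KFg b - KFg a)*t)/(b-a))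
        = (b-a) * ((KFg a + KFg b)/2) := by
      rw [intervalIntegral.integral_div,
        integral_add intervalIntegrable_const (hcont2.intervalIntegrable a b : IntervalIntegrable _ MeasureTheory.volume a b),
        integral_const, integral_const_mul, integral_id, smul_eq_mul]
      field_simp
      ring
    rw [hcval] at this
    rw [div_le_iff₀ hba]
    linarith

lemma KFg_hh' {a b : ℝ} (ha : a ∈ Set.Ioc (0:ℝ) (1/2)) (hb : b ∈ Set.Ioc (0:ℝ) (1/2)) :
    KFg ((a+b)/2) ≤ Real.log (identric (1-a) (1-b)) - Real.log (identric a b) ∧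
    Real.log (identric (1-a) (1-b)) - Real.log (identric a b) ≤ (KFg a + KFg b)/2 := by
  rcases lt_trichotomy a b with h | h | h
  · exact KFg_hh ha hb h
  · subst h
    have h1 : identric a a = a := if_pos rfl
    have h2 : identric (1-a) (1-a) = 1-a := if_pos rfl
    rw [h1, h2]
    constructor
    · rw [show (a+a)/2 = a by ring]
      exact le_of_eq rfl
    · rw [show (KFg a + KFg a)/2 = KFg a by ring]
      exact le_of_eq rfl
  · have h1a : (0:ℝ) < 1 - a := by have := ha.2; linarith
    have h1b : (0:ℝ) < 1 - b := by have := hb.2; linarith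
    have := KFg_hh hb ha h
    rw [identric_comm (1-b) (1-a) h1b h1a, identric_comm b a hb.1 ha.1,
      show (b+a)/2 = (a+b)/2 by ring, show (KFg b + KFg a)/2 = (KFg a + KFg b)/2 by ring] at this
    exact this

lemma KF_sum_mem_Ioc {n : ℕ} (w y : Fin n → ℝ) (hw0 : ∀ j, 0 ≤ w j) (hw1 : ∑ j, w j = 1)
    (hy : ∀ j, y j ∈ Set.Ioc (0:ℝ) (1/2)) : (∑ j, w j * y j) ∈ Set.Ioc (0:ℝ) (1/2) := by
  constructor
  · have hex : ∃ j, 0 < w j := by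
      by_contra h
      push_neg at h
      have : ∑ j, w j = 0 := Finset.sum_eq_zero (fun j _ => le_antisymm (h j) (hw0 j))
      rw [this] at hw1; norm_num at hw1
    obtain ⟨j₀, hj₀⟩ := hex
    exact Finset.sum_pos' (fun j _ => mul_nonneg (hw0 j) (hy j).1.le)
      ⟨j₀, Finset.mem_univ _, mul_pos hj₀ (hy j₀).1⟩
  · calc ∑ j, w j * y j ≤ ∑ j, w j * (1/2) :=
          Finset.sum_le_sum (fun j _ => mul_le_mul_of_nonneg_left (hy j).2 (hw0 j))
    _ = 1/2 := by rw [← Finset.sum_mul, hw1, one_mul]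

lemma KF_swap_sum {m n : ℕ} (μ : Fin m → ℝ) (ω : Fin m → Fin n → ℝ) (lam y : Fin n → ℝ)
    (hωμ : ∀ j, ∑ i, ω i j * μ i = 1) :
    ∑ i, μ i * (∑ j, ω i j * lam j * y j) = ∑ j, lam j * y j := by
  calc ∑ i, μ i * (∑ j, ω i j * lam j * y j) = ∑ i, ∑ j, μ i * (ω i j * lam j * y j) := by
        simp [Finset.mul_sum]
    _ = ∑ j, ∑ i, μ i * (ω i j * lam j * y j) := Finset.sum_comm
    _ = ∑ j, (∑ i, ω i j * μ i) * (lam j * y j) := by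
        refine Finset.sum_congr rfl (fun j _ => ?_)
        rw [Finset.sum_mul]
        exact Finset.sum_congr rfl (fun i _ => by ring)
    _ = ∑ j, lam j * y j := by
        refine Finset.sum_congr rfl (fun j _ => ?_)
        rw [hωμ j, one_mul]

/-- Refinement of Ky Fan's inequality `Aₙ'/Aₙ ≤ Gₙ'/Gₙ` via two weight functions
and the identric mean. -/
theorem ky_fan_refinement_identric
    {m n : ℕ} (μ : Fin m → ℝ) (lam : Fin n → ℝ)
    (hμ0 : ∀ i, 0 ≤ μ i) (hμ1 : ∑ i, μ i = 1)
    (hlam0 : ∀ j, 0 ≤ lam j) (hlam1 : ∑ j, lam j = 1)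
    (ω₁ ω₂ : Fin m → Fin n → ℝ)
    (hω₁0 : ∀ i j, 0 ≤ ω₁ i j) (hω₁μ : ∀ j, ∑ i, ω₁ i j * μ i = 1)
    (hω₁lam : ∀ i, ∑ j, ω₁ i j * lam j = 1)
    (hω₂0 : ∀ i j, 0 ≤ ω₂ i j) (hω₂μ : ∀ j, ∑ i, ω₂ i j * μ i = 1)
    (hω₂lam : ∀ i, ∑ j, ω₂ i j * lam j = 1)
    (x : Fin n → ℝ) (hx0 : ∀ j, 0 < x j) (hxhalf : ∀ j, x j ≤ 1 / 2) :
    (∑ j, lam j * (1 - x j)) / (∑ j, lam j * x j) ≤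
        (∏ i, (identric (∑ j, ω₁ i j * lam j * (1 - x j)) (∑ j, ω₂ i j * lam j * (1 - x j)) /
            identric (∑ j, ω₁ i j * lam j * x j) (∑ j, ω₂ i j * lam j * x j)) ^ μ i) ∧
      (∏ i, (identric (∑ j, ω₁ i j * lam j * (1 - x j)) (∑ j, ω₂ i j * lam j * (1 - x j)) /
            identric (∑ j, ω₁ i j * lam j * x j) (∑ j, ω₂ i j * lam j * x j)) ^ μ i) ≤
        (∏ j, (1 - x j) ^ lam j) / (∏ j, x j ^ lam j) := by
  have hxm : ∀ j, x j ∈ Set.Ioc (0:ℝ) (1/2) := fun j => ⟨hx0 j, hxhalf j⟩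
  -- rewrite the (1 - x) sums
  have e0 : ∑ j, lam j * (1 - x j) = 1 - ∑ j, lam j * x j := by
    simp [mul_sub, Finset.sum_sub_distrib, hlam1]
  have e1 : ∀ i, (∑ j, ω₁ i j * lam j * (1 - x j)) = 1 - ∑ j, ω₁ i j * lam j * x j := by
    intro i; simp [mul_sub, Finset.sum_sub_distrib, hω₁lam i]
  have e2 : ∀ i, (∑ j, ω₂ i j * lam j * (1 - x j)) = 1 - ∑ j, ω₂ i j * lam j * x j := by
    intro i; simp [mul_sub, Finset.sum_sub_distrib, hω₂lam i]
  simp only [e0, e1, e2]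
  set A := ∑ j, lam j * x j with hAdef
  have hA : A ∈ Set.Ioc (0:ℝ) (1/2) := KF_sum_mem_Ioc lam x hlam0 hlam1 hxm
  set a : Fin m → ℝ := fun i => ∑ j, ω₁ i j * lam j * x j with hadef
  set b : Fin m → ℝ := fun i => ∑ j, ω₂ i j * lam j * x j with hbdef
  have hai : ∀ i, a i ∈ Set.Ioc (0:ℝ) (1/2) := fun i =>
    KF_sum_mem_Ioc (fun j => ω₁ i j * lam j) x
      (fun j => mul_nonneg (hω₁0 i j) (hlam0 j)) (hω₁lam i) hxm
  have hbi : ∀ i, b i ∈ Set.Ioc (0:ℝ) (1/2) := fun i =>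
    KF_sum_mem_Ioc (fun j => ω₂ i j * lam j) x
      (fun j => mul_nonneg (hω₂0 i j) (hlam0 j)) (hω₂lam i) hxm
  have hIa : ∀ i, 0 < identric (a i) (b i) := fun i => identric_pos (hai i).1 (hbi i).1
  have hIa' : ∀ i, 0 < identric (1 - a i) (1 - b i) := fun i =>
    identric_pos (by have := (hai i).2; linarith) (by have := (hbi i).2; linarith)
  have hr : ∀ i, 0 < identric (1 - a i) (1 - b i) / identric (a i) (b i) :=
    fun i => div_pos (hIa' i) (hIa i)
  -- positivity of all three quantities
  have hL : 0 < (1 - A) / A := div_pos (by have := hA.2; linarith) hA.1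
  have hP : 0 < ∏ i, (identric (1 - a i) (1 - b i) / identric (a i) (b i)) ^ μ i :=
    Finset.prod_pos (fun i _ => Real.rpow_pos_of_pos (hr i) _)
  have hG : 0 < ∏ j, x j ^ lam j := Finset.prod_pos (fun j _ => Real.rpow_pos_of_pos (hx0 j) _)
  have hG' : 0 < ∏ j, (1 - x j) ^ lam j := Finset.prod_pos (fun j _ =>
    Real.rpow_pos_of_pos (by have := hxhalf j; linarith) _)
  have hR : 0 < (∏ j, (1 - x j) ^ lam j) / ∏ j, x j ^ lam j := div_pos hG' hG
  -- log of the product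
  have hlogP : Real.log (∏ i, (identric (1 - a i) (1 - b i) / identric (a i) (b i)) ^ μ i)
      = ∑ i, μ i * (Real.log (identric (1 - a i) (1 - b i)) - Real.log (identric (a i) (b i))) := by
    rw [Real.log_prod (fun i _ => ne_of_gt (Real.rpow_pos_of_pos (hr i) _))]
    refine Finset.sum_congr rfl (fun i _ => ?_)
    rw [Real.log_rpow (hr i), Real.log_div (ne_of_gt (hIa' i)) (ne_of_gt (hIa i))]
  constructor
  · -- left inequality
    rw [← Real.log_le_log_iff hL hP, hlogP,
      Real.log_div (by have := hA.2; intro h; linarith) (ne_of_gt hA.1)]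
    have hmid : ∀ i, (a i + b i)/2 ∈ Set.Ioc (0:ℝ) (1/2) := fun i =>
      ⟨by have := (hai i).1; have := (hbi i).1; linarith,
       by have := (hai i).2; have := (hbi i).2; linarith⟩
    have hsummid : ∑ i, μ i * ((a i + b i)/2) = A := by
      have h1 : ∑ i, μ i * a i = A := by
        rw [hadef, hAdef]; exact KF_swap_sum μ ω₁ lam x hω₁μ
      have h2 : ∑ i, μ i * b i = A := by
        rw [hbdef, hAdef]; exact KF_swap_sum μ ω₂ lam x hω₂μ
      calc ∑ i, μ i * ((a i + b i)/2) = (∑ i, μ i * a i + ∑ i, μ i * b i)/2 := by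
            rw [← Finset.sum_add_distrib]
            rw [Finset.sum_div]
            exact Finset.sum_congr rfl (fun i _ => by ring)
        _ = A := by rw [h1, h2]; ring
    have hjen := KFg_convex.map_sum_le (w := μ) (p := fun i => (a i + b i)/2)
      (fun i _ => hμ0 i) hμ1 (fun i _ => hmid i)
    simp only [smul_eq_mul, hsummid] at hjen
    calc Real.log (1 - A) - Real.log A = KFg A := rfl
      _ ≤ ∑ i, μ i * KFg ((a i + b i)/2) := hjen
      _ ≤ ∑ i, μ i * (Real.log (identric (1 - a i) (1 - b i)) - Real.log (identric (a i) (b i))) :=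
          Finset.sum_le_sum (fun i _ =>
            mul_le_mul_of_nonneg_left (KFg_hh' (hai i) (hbi i)).1 (hμ0 i))
  · -- right inequality
    rw [← Real.log_le_log_iff hP hR, hlogP,
      Real.log_div (ne_of_gt hG') (ne_of_gt hG),
      Real.log_prod (fun j _ => ne_of_gt (Real.rpow_pos_of_pos (by have := hxhalf j; linarith) _)),
      Real.log_prod (fun j _ => ne_of_gt (Real.rpow_pos_of_pos (hx0 j) _))]
    have hRlog : ∑ j, Real.log ((1 - x j) ^ lam j) - ∑ j, Real.log (x j ^ lam j)
        = ∑ j, lam j * KFg (x j) := by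
      rw [← Finset.sum_sub_distrib]
      refine Finset.sum_congr rfl (fun j _ => ?_)
      rw [Real.log_rpow (by have := hxhalf j; linarith), Real.log_rpow (hx0 j)]
      unfold KFg; ring
    rw [hRlog]
    have hjena : ∀ i, KFg (a i) ≤ ∑ j, ω₁ i j * lam j * KFg (x j) := by
      intro i
      have h := KFg_convex.map_sum_le (w := fun j => ω₁ i j * lam j) (p := x)
        (fun j _ => mul_nonneg (hω₁0 i j) (hlam0 j)) (hω₁lam i) (fun j _ => hxm j)
      simp only [smul_eq_mul] at h
      rw [hadef]
      exact h
    have hjenb : ∀ i, KFg (b i) ≤ ∑ j, ω₂ i j * lam j * KFg (x j) := by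
      intro i
      have h := KFg_convex.map_sum_le (w := fun j => ω₂ i j * lam j) (p := x)
        (fun j _ => mul_nonneg (hω₂0 i j) (hlam0 j)) (hω₂lam i) (fun j _ => hxm j)
      simp only [smul_eq_mul] at h
      rw [hbdef]
      exact h
    calc ∑ i, μ i * (Real.log (identric (1 - a i) (1 - b i)) - Real.log (identric (a i) (b i)))
        ≤ ∑ i, μ i * ((KFg (a i) + KFg (b i))/2) :=
          Finset.sum_le_sum (fun i _ =>
            mul_le_mul_of_nonneg_left (KFg_hh' (hai i) (hbi i)).2 (hμ0 i))
      _ ≤ ∑ i, μ i * (((∑ j, ω₁ i j * lam j * KFg (x j)) + ∑ j, ω₂ i j * lam j * KFg (x j))/2) :=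
          Finset.sum_le_sum (fun i _ => mul_le_mul_of_nonneg_left
            (by have := hjena i; have := hjenb i; linarith) (hμ0 i))
      _ = ∑ j, lam j * KFg (x j) := by
          have h1 : ∑ i, μ i * (∑ j, ω₁ i j * lam j * KFg (x j)) = ∑ j, lam j * KFg (x j) :=
            KF_swap_sum μ ω₁ lam (fun j => KFg (x j)) hω₁μ
          have h2 : ∑ i, μ i * (∑ j, ω₂ i j * lam j * KFg (x j)) = ∑ j, lam j * KFg (x j) :=
            KF_swap_sum μ ω₂ lam (fun j => KFg (x j)) hω₂μ
          calc ∑ i, μ i * (((∑ j, ω₁ i j * lam j * KFg (x j)) + ∑ j, ω₂ i j * lam j * KFg (x j))/2)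
              = (∑ i, μ i * (∑ j, ω₁ i j * lam j * KFg (x j))
                + ∑ i, μ i * (∑ j, ω₂ i j * lam j * KFg (x j)))/2 := by
                rw [← Finset.sum_add_distrib, Finset.sum_div]
                exact Finset.sum_congr rfl (fun i _ => by ring)
            _ = ∑ j, lam j * KFg (x j) := by rw [h1, h2]; ring
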